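/- Let k be an algebraically closed field (of any characteristic) and let f ∈ k[x_1,…,x_n] be a non-constant polynomial. Then f is a factorially closed polynomial if and only if for every λ ∈ k the polynomial f − λ is irreducible in k[x_1,…,x_n]. -/

import Mathlib

open MvPolynomial

/-- A unit in a multivariate polynomial ring over a domain is a constant. -/
lemma aux_isUnit_eq_C {k : Type*} [CommRing k] [IsDomain k] :
    ∀ (n : ℕ) (g : MvPolynomial (Fin n) k), IsUnit g → ∃ c : k, g = C c := by
  intro n
  induction n with
  | zero => intro g _; exact ⟨g.coeff 0, g.eq_C_of_isEmpty⟩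
  | succ m ih =>
    intro g hg
    have h1 : IsUnit (MvPolynomial.finSuccEquiv k m g) := hg.map _
    rw [Polynomial.isUnit_iff] at h1
    obtain ⟨r, hr, hrg⟩ := h1
    obtain ⟨c, rfl⟩ := ih r hr
    refine ⟨c, (MvPolynomial.finSuccEquiv k m).injective ?_⟩
    rw [← hrg]
    simp [MvPolynomial.finSuccEquiv_apply]

/-- A nonconstant multivariate polynomial over an algebraically closed field is
transcendental: `Polynomial.aeval f` is injective. -/
lemma aux_aeval_injective {k : Type*} [Field k] [IsAlgClosed k] {n : ℕ}
    {f : MvPolynomial (Fin n) k} (hf : ∀ c : k, f ≠ C c) :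
    Function.Injective (Polynomial.aeval f : Polynomial k →ₐ[k] MvPolynomial (Fin n) k) := by
  rw [injective_iff_map_eq_zero]
  intro P hP
  by_contra hP0
  have hs : Polynomial.Splits P := IsAlgClosed.splits P
  have := Polynomial.Splits.eq_prod_roots hs
  apply_fun (Polynomial.aeval f : Polynomial k →ₐ[k] MvPolynomial (Fin n) k) at this
  rw [hP] at this
  rw [map_mul, map_multiset_prod, Multiset.map_map] at this
  have hlc : (Polynomial.aeval f) (Polynomial.C P.leadingCoeff) ≠ 0 := by
    simp only [Polynomial.aeval_C]
    exact fun h => hP0 (Polynomial.leadingCoeff_eq_zero.mp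
      ((map_eq_zero (algebraMap k (MvPolynomial (Fin n) k))).mp h))
  have hprod : ((P.roots.map fun a =>
      (Polynomial.aeval f) (Polynomial.X - Polynomial.C a))).prod ≠ 0 := by
    apply Multiset.prod_ne_zero
    intro h0
    rw [Multiset.mem_map] at h0
    obtain ⟨a, _, ha⟩ := h0
    simp only [map_sub, Polynomial.aeval_X, Polynomial.aeval_C] at ha
    rw [sub_eq_zero, MvPolynomial.algebraMap_eq] at ha
    exact hf a ha
  exact (mul_ne_zero hlc hprod) this.symm

/-- Key induction: if `g * h` is a constant times a product of fiber polynomials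
`f - C a`, all of which are irreducible, then `g` lies in `k[f]`. -/
lemma aux_mem_adjoin {k : Type*} [Field k] {n : ℕ}
    {f : MvPolynomial (Fin n) k}
    (hirr : ∀ lam : k, Irreducible (f - C lam)) :
    ∀ (s : Multiset k) (c : k) (g h : MvPolynomial (Fin n) k), g ≠ 0 → h ≠ 0 →
      g * h = C c * (s.map fun a => f - C a).prod → g ∈ Algebra.adjoin k {f} := by
  intro s
  induction s using Multiset.induction with
  | empty =>
    intro c g h hg hh heq
    simp only [Multiset.map_zero, Multiset.prod_zero, mul_one] at heq
    have hc : c ≠ 0 := by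
      rintro rfl
      rw [map_zero] at heq
      exact mul_ne_zero hg hh heq
    have hCc : IsUnit (MvPolynomial.C c : MvPolynomial (Fin n) k) :=
      (hc.isUnit).map MvPolynomial.C
    have hgu : IsUnit g := isUnit_of_dvd_unit ⟨h, heq.symm⟩ hCc
    obtain ⟨d, rfl⟩ := aux_isUnit_eq_C n g hgu
    rw [← MvPolynomial.algebraMap_eq]
    exact Subalgebra.algebraMap_mem _ d
  | cons a t ihs =>
    intro c g h hg hh heq
    have hfadj : f ∈ Algebra.adjoin k {f} := Algebra.self_mem_adjoin_singleton k f
    have hpadj : f - C a ∈ Algebra.adjoin k ({f} : Set (MvPolynomial (Fin n) k)) := by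
      rw [← MvPolynomial.algebraMap_eq]
      exact sub_mem hfadj (Subalgebra.algebraMap_mem _ a)
    have hprime : Prime (f - C a) := (hirr a).prime
    have hp0 : (f - C a) ≠ 0 := hprime.ne_zero
    have hdvd : (f - C a) ∣ g * h := by
      rw [heq, Multiset.map_cons, Multiset.prod_cons]
      exact ⟨C c * (t.map fun b => f - C b).prod, by ring⟩
    rcases hprime.2.2 g h hdvd with ⟨g', rfl⟩ | ⟨h', rfl⟩
    · have hg' : g' ≠ 0 := right_ne_zero_of_mul hg
      have heq' : g' * h = C c * (t.map fun b => f - C b).prod := by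
        apply mul_left_cancel₀ hp0
        rw [← mul_assoc, heq, Multiset.map_cons, Multiset.prod_cons]
        ring
      exact mul_mem hpadj (ihs c g' h hg' hh heq')
    · have hh' : h' ≠ 0 := right_ne_zero_of_mul hh
      have heq' : g * h' = C c * (t.map fun b => f - C b).prod := by
        apply mul_left_cancel₀ hp0
        calc (f - C a) * (g * h') = g * ((f - C a) * h') := by ring
          _ = C c * ((a ::ₘ t).map fun b => f - C b).prod := heq
          _ = (f - C a) * (C c * (t.map fun b => f - C b).prod) := by
              rw [Multiset.map_cons, Multiset.prod_cons]; ring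
      exact ihs c g h' hg hh' heq'

/-- **Theorem 2.6.** Over an algebraically closed field `k` (of any characteristic), a
non-constant polynomial `f ∈ k[x_1,…,x_n]` is factorially closed iff `f - λ` is irreducible
for every `λ ∈ k`. -/
theorem factoriallyClosed_iff_all_fibers_irreducible
    (k : Type*) [Field k] [IsAlgClosed k] (n : ℕ)
    (f : MvPolynomial (Fin n) k) (hf : ∀ c : k, f ≠ C c) :
    (∀ g h : MvPolynomial (Fin n) k, g ≠ 0 → h ≠ 0 → g * h ∈ Algebra.adjoin k {f} →
        g ∈ Algebra.adjoin k {f} ∧ h ∈ Algebra.adjoin k {f})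
      ↔ ∀ lam : k, Irreducible (f - C lam) := by
  have hfadj : f ∈ Algebra.adjoin k ({f} : Set (MvPolynomial (Fin n) k)) :=
    Algebra.self_mem_adjoin_singleton k f
  constructor
  · intro fc lam
    have hne : f - C lam ≠ 0 := sub_ne_zero.mpr (hf lam)
    constructor
    · intro hu
      obtain ⟨c, hc⟩ := aux_isUnit_eq_C n _ hu
      exact hf (c + lam) (by rw [map_add, ← hc]; ring)
    · intro g h heq
      have hg : g ≠ 0 := left_ne_zero_of_mul (heq ▸ hne)
      have hh : h ≠ 0 := right_ne_zero_of_mul (heq ▸ hne)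
      have hmem : g * h ∈ Algebra.adjoin k ({f} : Set (MvPolynomial (Fin n) k)) := by
        rw [← heq, ← MvPolynomial.algebraMap_eq]
        exact sub_mem hfadj (Subalgebra.algebraMap_mem _ lam)
      obtain ⟨hgm, hhm⟩ := fc g h hg hh hmem
      rw [Algebra.adjoin_singleton_eq_range_aeval, AlgHom.mem_range] at hgm hhm
      obtain ⟨P, hP⟩ := hgm
      obtain ⟨Q, hQ⟩ := hhm
      have hPQ : P * Q = Polynomial.X - Polynomial.C lam := by
        apply aux_aeval_injective hf
        rw [map_mul, hP, hQ, ← heq, map_sub, Polynomial.aeval_X, Polynomial.aeval_C,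
          MvPolynomial.algebraMap_eq]
      rcases (Polynomial.irreducible_X_sub_C lam).isUnit_or_isUnit hPQ.symm with hu | hu
      · exact Or.inl (hP ▸ hu.map (Polynomial.aeval f))
      · exact Or.inr (hQ ▸ hu.map (Polynomial.aeval f))
  · intro hirr g h hg hh hmem
    rw [Algebra.adjoin_singleton_eq_range_aeval, AlgHom.mem_range] at hmem
    obtain ⟨P, hP⟩ := hmem
    have hP0 : P ≠ 0 := by
      rintro rfl
      rw [map_zero] at hP
      exact mul_ne_zero hg hh hP.symm
    have hs : Polynomial.Splits P := IsAlgClosed.splits P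
    have hfact := Polynomial.Splits.eq_prod_roots hs
    have key : g * h = C P.leadingCoeff * (P.roots.map fun a => f - C a).prod := by
      rw [← hP]
      conv_lhs => rw [hfact]
      rw [map_mul, map_multiset_prod, Multiset.map_map, Polynomial.aeval_C,
        MvPolynomial.algebraMap_eq]
      congr 1
      congr 1
      apply Multiset.map_congr rfl
      intro a _
      simp [MvPolynomial.algebraMap_eq]
    refine ⟨aux_mem_adjoin hirr P.roots P.leadingCoeff g h hg hh key,
      aux_mem_adjoin hirr P.roots P.leadingCoeff h g hh hg ?_⟩
    rw [mul_comm]; exact key
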